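/- Under the algorithmic setting and local assumptions below, define ε₁ := min{1/(2 + L_g), ε₀/2} and c := ν_min⁻¹ θ (2 + L_g)^{1+τ−δ} (1 + L_g + aL + ν̄(2 + L_g)^δ) + (L + 2aL)/(2 ν_min β) + 2. Then for every k ∈ K with x^k ∈ B_{ε₁}(x*), it holds that ‖d^k‖ ≤ c·dist(x^k, X*). -/

import Mathlib

open scoped RealInnerProductSpace
open Filter Metric

noncomputable section

/-- The convex subdifferential of `g` at `y`. -/
def subdiff {n : ℕ} (g : EuclideanSpace ℝ (Fin n) → ℝ) (y : EuclideanSpace ℝ (Fin n)) :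
    Set (EuclideanSpace ℝ (Fin n)) :=
  {v | ∀ z, g y + ⟪v, z - y⟫ ≤ g z}

/-- The proximity operator `prox_g(z)`, the (unique, for convex `g`) minimizer of
`y ↦ g y + (1/2)‖y − z‖²`. -/
noncomputable def proxPt {n : ℕ} (g : EuclideanSpace ℝ (Fin n) → ℝ)
    (z : EuclideanSpace ℝ (Fin n)) : EuclideanSpace ℝ (Fin n) :=
  Classical.epsilon fun p => ∀ y, g p + (1 / 2) * ‖p - z‖ ^ 2 ≤ g y + (1 / 2) * ‖y - z‖ ^ 2

/-- The residual (prox-gradient) mapping `r(x) = x − prox_φ(x − ∇f(x))`. -/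
noncomputable def resid {n : ℕ} (f φ : EuclideanSpace ℝ (Fin n) → ℝ)
    (x : EuclideanSpace ℝ (Fin n)) : EuclideanSpace ℝ (Fin n) :=
  x - proxPt φ (x - gradient f x)

/-- The smallest eigenvalue of a symmetric operator on ℝᵐ, as the infimum of its quadratic
form over the unit sphere. -/
noncomputable def lambdaMin {m : ℕ} (T : EuclideanSpace ℝ (Fin m) →L[ℝ] EuclideanSpace ℝ (Fin m)) :
    ℝ :=
  ⨅ u : {u : EuclideanSpace ℝ (Fin m) // ‖u‖ = 1}, ⟪T u.1, u.1⟫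

namespace Stmt16Aux

variable {n : ℕ} {φ : EuclideanSpace ℝ (Fin n) → ℝ}

lemma convexOn_cont (hφ : ConvexOn ℝ Set.univ φ) : Continuous φ := by
  exact continuousOn_univ.mp (hφ.continuousOn isOpen_univ)

lemma subdiff_mono {v₁ v₂ y₁ y₂ : EuclideanSpace ℝ (Fin n)}
    (h₁ : v₁ ∈ subdiff φ y₁) (h₂ : v₂ ∈ subdiff φ y₂) :
    0 ≤ ⟪v₁ - v₂, y₁ - y₂⟫ := by
  have a1 := h₁ y₂
  have a2 := h₂ y₁
  simp only [inner_sub_left, inner_sub_right] at a1 a2 ⊢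
  linarith

/-- Existence of a global minimizer of `y ↦ φ y + ⟪v,y⟫ + ½⟪G(y-z),y-z⟫`. -/
lemma exists_min_quad (hφ : ConvexOn ℝ Set.univ φ)
    (G : EuclideanSpace ℝ (Fin n) →L[ℝ] EuclideanSpace ℝ (Fin n)) (c₀ : ℝ) (hc₀ : 0 < c₀)
    (hG : ∀ h, c₀ * ‖h‖ ^ 2 ≤ ⟪G h, h⟫) (v z : EuclideanSpace ℝ (Fin n)) :
    ∃ p, ∀ y, φ p + ⟪v, p⟫ + (1/2) * ⟪G (p - z), p - z⟫
        ≤ φ y + ⟪v, y⟫ + (1/2) * ⟪G (y - z), y - z⟫ := by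
  set P : EuclideanSpace ℝ (Fin n) → ℝ :=
    fun y => φ y + ⟪v, y⟫ + (1/2) * ⟪G (y - z), y - z⟫ with hP
  clear_value P
  have hφc : Continuous φ := convexOn_cont hφ
  have hPc : Continuous P := by
    rw [hP]
    apply ((hφc.add ((continuous_const.inner continuous_id))).add _)
    exact continuous_const.mul ((G.continuous.comp (continuous_id.sub continuous_const)).inner
      (continuous_id.sub continuous_const))
  -- minimum of φ on the ball of radius 1
  obtain ⟨y₁, hy₁mem, hy₁⟩ := (isCompact_closedBall z 1).exists_isMinOn
    ⟨z, mem_closedBall_self zero_le_one⟩ hφc.continuousOn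
  set C : ℝ := φ z - φ y₁ with hC
  clear_value C
  have hC0 : 0 ≤ C := by
    have := hy₁ (mem_closedBall_self zero_le_one)
    have h2 : φ y₁ ≤ φ z := this
    rw [hC]; linarith
  -- linear lower bound for φ far away
  have hlow : ∀ y : EuclideanSpace ℝ (Fin n), 1 ≤ ‖y - z‖ → φ z - C * ‖y - z‖ ≤ φ y := by
    intro y hs
    set s : ℝ := ‖y - z‖ with hsdef
    clear_value s
    have hspos : 0 < s := lt_of_lt_of_le one_pos hs
    have hw : z + s⁻¹ • (y - z) = (1 - s⁻¹) • z + s⁻¹ • y := by module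
    have hwball : z + s⁻¹ • (y - z) ∈ closedBall z 1 := by
      simp only [mem_closedBall, dist_eq_norm, add_sub_cancel_left, norm_smul, norm_inv,
        Real.norm_eq_abs, abs_of_pos hspos]
      rw [← hsdef]
      exact le_of_eq (inv_mul_cancel₀ hspos.ne')
    have hconv := hφ.2 (Set.mem_univ z) (Set.mem_univ y)
      (by
        have : s⁻¹ ≤ 1 := by
          rw [inv_le_one_iff₀]; right; exact hs
        linarith [this] : (0:ℝ) ≤ 1 - s⁻¹)
      (le_of_lt (inv_pos.mpr hspos)) (by ring)
    rw [← hw] at hconv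
    have hmin := hy₁ hwball
    -- φ y₁ ≤ φ (z + s⁻¹ • (y-z)) ≤ (1-s⁻¹) φ z + s⁻¹ φ y
    have h2 : φ y₁ ≤ (1 - s⁻¹) * φ z + s⁻¹ * φ y := le_trans hmin hconv
    have h3 : s * φ y₁ ≤ s * ((1 - s⁻¹) * φ z + s⁻¹ * φ y) :=
      mul_le_mul_of_nonneg_left h2 hspos.le
    have h4 : s * ((1 - s⁻¹) * φ z + s⁻¹ * φ y) = s * φ z - φ z + φ y := by
      field_simp
    rw [h4] at h3
    have : φ z - C * s ≤ φ y := by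
      simp only [hC]
      nlinarith
    exact this
  set R : ℝ := max 1 (2 * (C + ‖v‖) / c₀ + 1) with hR
  clear_value R
  have hR1 : 1 ≤ R := by rw [hR]; exact le_max_left _ _
  obtain ⟨p, hpmem, hp⟩ := (isCompact_closedBall z R).exists_isMinOn
    ⟨z, mem_closedBall_self (by linarith)⟩ hPc.continuousOn
  refine ⟨p, fun y => ?_⟩
  suffices hPP : P p ≤ P y by rw [hP] at hPP; exact hPP
  by_cases hy : y ∈ closedBall z R
  · exact hp hy
  · -- far away: P y ≥ P z ≥ P p
    have hzmem : z ∈ closedBall z R := mem_closedBall_self (by linarith)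
    have h0 : P p ≤ P z := hp hzmem
    have hs : R < ‖y - z‖ := by
      simpa [mem_closedBall, dist_eq_norm] using hy
    set s : ℝ := ‖y - z‖ with hsdef
    clear_value s
    have hs1 : 1 ≤ s := le_trans hR1 hs.le
    have hsR : 2 * (C + ‖v‖) / c₀ + 1 ≤ s :=
      le_trans (by rw [hR]; exact le_max_right _ _) hs.le
    have hlb : φ z - C * s ≤ φ y := by rw [hsdef]; exact hlow y (hsdef ▸ hs1)
    have hinner : ⟪v, y⟫ = ⟪v, z⟫ + ⟪v, y - z⟫ := by
      rw [inner_sub_right]; ring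
    have habs : -(‖v‖ * s) ≤ ⟪v, y - z⟫ := by
      have := abs_real_inner_le_norm v (y - z)
      rw [← hsdef] at this
      cases' abs_le.mp this with h _
      linarith
    have hquad : c₀ * s ^ 2 ≤ ⟪G (y - z), y - z⟫ := by
      have := hG (y - z); rwa [← hsdef] at this
    have hPz : P z = φ z + ⟪v, z⟫ := by
      simp [hP, inner_zero_left]
    have hPy : φ z - C * s + (⟪v, z⟫ + -(‖v‖ * s)) + (1/2) * (c₀ * s ^ 2) ≤ P y := by
      simp only [hP]
      have : (1/2) * (c₀ * s^2) ≤ (1/2) * ⟪G (y - z), y - z⟫ := by linarith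
      rw [hinner]
      nlinarith [hlb]
    have hfar : P z ≤ P y := by
      rw [hPz]
      have hkey : 0 ≤ - (C * s) - ‖v‖ * s + (1/2) * (c₀ * s ^ 2) := by
        have hspos : 0 < s := lt_of_lt_of_le one_pos hs1
        have h1 : 2 * (C + ‖v‖) ≤ c₀ * (s - 1) := by
          have := (div_le_iff₀ hc₀).mp (by linarith : 2 * (C + ‖v‖) / c₀ ≤ s - 1)
          linarith [this]
        nlinarith
      linarith
    exact le_trans h0 hfar

lemma quad_expand (G : EuclideanSpace ℝ (Fin n) →L[ℝ] EuclideanSpace ℝ (Fin n))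
    (hGsym : ∀ u w, ⟪G u, w⟫ = ⟪u, G w⟫) (q u : EuclideanSpace ℝ (Fin n)) (t : ℝ) :
    ⟪G (q + t • u), q + t • u⟫
      = ⟪G q, q⟫ + 2 * t * ⟪G q, u⟫ + t ^ 2 * ⟪G u, u⟫ := by
  rw [map_add, map_smul]
  rw [inner_add_left, inner_add_right, inner_add_right, real_inner_smul_left,
    real_inner_smul_left, real_inner_smul_right, real_inner_smul_right,
    hGsym u q, real_inner_comm u (G q)]
  ring

lemma min_subgrad (hφ : ConvexOn ℝ Set.univ φ)
    (G : EuclideanSpace ℝ (Fin n) →L[ℝ] EuclideanSpace ℝ (Fin n))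
    (hGsym : ∀ u w, ⟪G u, w⟫ = ⟪u, G w⟫) (v z p : EuclideanSpace ℝ (Fin n))
    (hp : ∀ y, φ p + ⟪v, p⟫ + (1/2) * ⟪G (p - z), p - z⟫
        ≤ φ y + ⟪v, y⟫ + (1/2) * ⟪G (y - z), y - z⟫) :
    -(v + G (p - z)) ∈ subdiff φ p := by
  intro y
  have goalform : ⟪-(v + G (p - z)), y - p⟫ = -(⟪v, y - p⟫ + ⟪G (p - z), y - p⟫) := by
    rw [inner_neg_left, inner_add_left]
  rw [goalform]
  set u := y - p with hu
  set q := p - z with hq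
  set X : ℝ := φ y - φ p + ⟪v, u⟫ + ⟪G q, u⟫ with hX
  suffices hX0 : 0 ≤ X by rw [hX] at hX0; linarith
  set M : ℝ := ⟪G u, u⟫ with hM
  have key : ∀ t : ℝ, 0 < t → t ≤ 1 → -(t / 2 * M) ≤ X := by
    intro t ht0 ht1
    have hyt := hp (p + t • u)
    have hconv : φ (p + t • u) ≤ (1 - t) * φ p + t * φ y := by
      have h := hφ.2 (Set.mem_univ p) (Set.mem_univ y) (by linarith : (0:ℝ) ≤ 1 - t)
        ht0.le (by ring)
      have he : (1 - t) • p + t • y = p + t • u := by rw [hu]; module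
      rw [he] at h
      simpa using h
    have hq1 : (p + t • u) - z = q + t • u := by rw [hq]; abel
    have hv : ⟪v, p + t • u⟫ = ⟪v, p⟫ + t * ⟪v, u⟫ := by
      rw [inner_add_right, real_inner_smul_right]
    rw [hq1, quad_expand G hGsym q u t, hv] at hyt
    have h0 : t * 0 ≤ t * (X + t / 2 * M) := by rw [hX, hM]; nlinarith
    have := le_of_mul_le_mul_left h0 ht0
    linarith
  by_contra hneg
  push_neg at hneg
  set t : ℝ := min 1 (-X / (|M| + 1)) with htd
  have habs : (0:ℝ) < |M| + 1 := by positivity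
  have ht0 : 0 < t := lt_min one_pos (div_pos (by linarith) habs)
  have ht1 : t ≤ 1 := min_le_left _ _
  have hk := key t ht0 ht1
  have h1 : t ≤ -X / (|M| + 1) := min_le_right _ _
  have h2 : t * (|M| + 1) ≤ -X := by
    rw [← le_div_iff₀ habs]; exact h1
  nlinarith [mul_le_mul_of_nonneg_left (le_abs_self M) ht0.le,
    mul_le_mul_of_nonneg_left (neg_abs_le M) ht0.le, abs_nonneg M]

lemma subgrad_min (G : EuclideanSpace ℝ (Fin n) →L[ℝ] EuclideanSpace ℝ (Fin n))
    (hGsym : ∀ u w, ⟪G u, w⟫ = ⟪u, G w⟫) (hGpsd : ∀ h, 0 ≤ ⟪G h, h⟫)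
    (v z p : EuclideanSpace ℝ (Fin n))
    (hsub : -(v + G (p - z)) ∈ subdiff φ p) :
    ∀ y, φ p + ⟪v, p⟫ + (1/2) * ⟪G (p - z), p - z⟫
        ≤ φ y + ⟪v, y⟫ + (1/2) * ⟪G (y - z), y - z⟫ := by
  intro y
  have h := hsub y
  rw [inner_neg_left, inner_add_left] at h
  have hyz : y - z = (p - z) + (1:ℝ) • (y - p) := by module
  have hquad := quad_expand G hGsym (p - z) (y - p) 1
  rw [← hyz] at hquad
  have hv : ⟪v, y⟫ = ⟪v, p⟫ + ⟪v, y - p⟫ := by rw [inner_sub_right]; ring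
  have hpsd := hGpsd (y - p)
  rw [hquad, hv]
  nlinarith [h]

lemma min_unique (G : EuclideanSpace ℝ (Fin n) →L[ℝ] EuclideanSpace ℝ (Fin n)) (c₀ : ℝ)
    (hc₀ : 0 < c₀) (hG : ∀ h, c₀ * ‖h‖ ^ 2 ≤ ⟪G h, h⟫)
    (hGsym : ∀ u w, ⟪G u, w⟫ = ⟪u, G w⟫) (hφ : ConvexOn ℝ Set.univ φ)
    (v z p₁ p₂ : EuclideanSpace ℝ (Fin n))
    (h₁ : ∀ y, φ p₁ + ⟪v, p₁⟫ + (1/2) * ⟪G (p₁ - z), p₁ - z⟫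
        ≤ φ y + ⟪v, y⟫ + (1/2) * ⟪G (y - z), y - z⟫)
    (h₂ : ∀ y, φ p₂ + ⟪v, p₂⟫ + (1/2) * ⟪G (p₂ - z), p₂ - z⟫
        ≤ φ y + ⟪v, y⟫ + (1/2) * ⟪G (y - z), y - z⟫) : p₁ = p₂ := by
  have s₁ := min_subgrad hφ G hGsym v z p₁ h₁
  have s₂ := min_subgrad hφ G hGsym v z p₂ h₂
  have hm := subdiff_mono s₁ s₂
  have he : -(v + G (p₁ - z)) - -(v + G (p₂ - z)) = -(G (p₁ - p₂)) := by
    have hms : G (p₁ - p₂) = G (p₁ - z) - G (p₂ - z) := by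
      rw [← map_sub]
      congr 1
      abel
    rw [hms]
    abel
  rw [he, inner_neg_left] at hm
  have hg := hG (p₁ - p₂)
  have hn2 : ‖p₁ - p₂‖ ^ 2 = 0 := by
    have h0 : c₀ * ‖p₁ - p₂‖ ^ 2 ≤ 0 := by linarith
    nlinarith [sq_nonneg ‖p₁ - p₂‖]
  have := pow_eq_zero_iff (n := 2) (by norm_num)|>.mp hn2
  exact sub_eq_zero.mp (norm_eq_zero.mp this)

lemma inner_self_quad (h : EuclideanSpace ℝ (Fin n)) :
    (1:ℝ) * ‖h‖ ^ 2 ≤ ⟪(ContinuousLinearMap.id ℝ (EuclideanSpace ℝ (Fin n))) h, h⟫ := by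
  rw [ContinuousLinearMap.id_apply, real_inner_self_eq_norm_sq]
  ring_nf
  exact le_refl _

lemma id_sym : ∀ u w : EuclideanSpace ℝ (Fin n),
    ⟪(ContinuousLinearMap.id ℝ (EuclideanSpace ℝ (Fin n))) u, w⟫
      = ⟪u, (ContinuousLinearMap.id ℝ (EuclideanSpace ℝ (Fin n))) w⟫ := by
  intro u w; rw [ContinuousLinearMap.id_apply, ContinuousLinearMap.id_apply]

/-- transfer between prox-form minimality and quadratic-form minimality -/
lemma quadform_iff (z p : EuclideanSpace ℝ (Fin n)) :
    (∀ y, φ p + ⟪(0 : EuclideanSpace ℝ (Fin n)), p⟫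
        + (1/2) * ⟪(ContinuousLinearMap.id ℝ (EuclideanSpace ℝ (Fin n))) (p - z), p - z⟫
        ≤ φ y + ⟪(0 : EuclideanSpace ℝ (Fin n)), y⟫
        + (1/2) * ⟪(ContinuousLinearMap.id ℝ (EuclideanSpace ℝ (Fin n))) (y - z), y - z⟫)
      ↔ (∀ y, φ p + (1 / 2) * ‖p - z‖ ^ 2 ≤ φ y + (1 / 2) * ‖y - z‖ ^ 2) := by
  constructor <;> intro h y
  all_goals
    have := h y
    simp only [ContinuousLinearMap.id_apply, inner_zero_left, real_inner_self_eq_norm_sq]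
      at this ⊢
    linarith

lemma prox_isMin (hφ : ConvexOn ℝ Set.univ φ) (z : EuclideanSpace ℝ (Fin n)) :
    ∀ y, φ (proxPt φ z) + (1 / 2) * ‖proxPt φ z - z‖ ^ 2 ≤ φ y + (1 / 2) * ‖y - z‖ ^ 2 := by
  obtain ⟨p, hp⟩ := exists_min_quad hφ (ContinuousLinearMap.id ℝ _) 1 one_pos
    inner_self_quad 0 z
  have hex : ∃ q : EuclideanSpace ℝ (Fin n),
      ∀ y, φ q + (1 / 2) * ‖q - z‖ ^ 2 ≤ φ y + (1 / 2) * ‖y - z‖ ^ 2 :=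
    ⟨p, (quadform_iff z p).mp hp⟩
  exact Classical.epsilon_spec hex

lemma prox_subgrad (hφ : ConvexOn ℝ Set.univ φ) (z : EuclideanSpace ℝ (Fin n)) :
    z - proxPt φ z ∈ subdiff φ (proxPt φ z) := by
  have hmin := (quadform_iff z (proxPt φ z)).mpr (prox_isMin hφ z)
  have h := min_subgrad hφ (ContinuousLinearMap.id ℝ _) id_sym 0 z (proxPt φ z) hmin
  have he : -((0 : EuclideanSpace ℝ (Fin n))
      + (ContinuousLinearMap.id ℝ (EuclideanSpace ℝ (Fin n))) (proxPt φ z - z))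
      = z - proxPt φ z := by
    rw [ContinuousLinearMap.id_apply, zero_add, neg_sub]
  rwa [he] at h

lemma prox_of_subgrad (hφ : ConvexOn ℝ Set.univ φ) {p v : EuclideanSpace ℝ (Fin n)}
    (h : v ∈ subdiff φ p) : proxPt φ (p + v) = p := by
  have hsub : -((0 : EuclideanSpace ℝ (Fin n))
      + (ContinuousLinearMap.id ℝ (EuclideanSpace ℝ (Fin n))) (p - (p + v))) ∈ subdiff φ p := by
    have he : -((0 : EuclideanSpace ℝ (Fin n))
        + (ContinuousLinearMap.id ℝ (EuclideanSpace ℝ (Fin n))) (p - (p + v))) = v := by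
      rw [ContinuousLinearMap.id_apply, zero_add]
      abel
    rwa [he]
  have hpmin := subgrad_min (ContinuousLinearMap.id ℝ _) id_sym
    (fun h => by rw [ContinuousLinearMap.id_apply, real_inner_self_eq_norm_sq]; positivity)
    0 (p + v) p hsub
  have hemin := (quadform_iff (p + v) (proxPt φ (p + v))).mpr (prox_isMin hφ (p + v))
  exact min_unique (ContinuousLinearMap.id ℝ _) 1 one_pos inner_self_quad id_sym hφ
    0 (p + v) _ _ hemin hpmin

lemma prox_lip (hφ : ConvexOn ℝ Set.univ φ) (z₁ z₂ : EuclideanSpace ℝ (Fin n)) :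
    ‖proxPt φ z₁ - proxPt φ z₂‖ ≤ ‖z₁ - z₂‖ := by
  set p₁ := proxPt φ z₁
  set p₂ := proxPt φ z₂
  have hm := subdiff_mono (prox_subgrad hφ z₁) (prox_subgrad hφ z₂)
  have he : (z₁ - p₁) - (z₂ - p₂) = (z₁ - z₂) - (p₁ - p₂) := by abel
  rw [he, inner_sub_left] at hm
  have h2 := real_inner_le_norm (z₁ - z₂) (p₁ - p₂)
  by_cases h0 : ‖p₁ - p₂‖ = 0
  · rw [h0]; positivity
  · have hpos : 0 < ‖p₁ - p₂‖ := lt_of_le_of_ne (norm_nonneg _) (Ne.symm h0)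
    nlinarith [real_inner_self_eq_norm_sq (p₁ - p₂)]

section Calc

variable {m : ℕ} {ψ : EuclideanSpace ℝ (Fin m) → ℝ}
    {A : EuclideanSpace ℝ (Fin n) →L[ℝ] EuclideanSpace ℝ (Fin m)} {b : EuclideanSpace ℝ (Fin m)}
    {f : EuclideanSpace ℝ (Fin n) → ℝ}

lemma grad_comp (hψ : ContDiff ℝ 2 ψ) (hf : ∀ y, f y = ψ (A y - b)) (x : EuclideanSpace ℝ (Fin n)) :
    gradient f x = ContinuousLinearMap.adjoint A (gradient ψ (A x - b)) := by
  have h1 : HasFDerivAt (fun y : EuclideanSpace ℝ (Fin n) => A y - b) A x :=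
    A.hasFDerivAt.sub_const b
  have h2 : HasFDerivAt ψ (fderiv ℝ ψ (A x - b)) (A x - b) :=
    (hψ.differentiable (by norm_num)).differentiableAt.hasFDerivAt
  have h3 : HasFDerivAt f ((fderiv ℝ ψ (A x - b)).comp A) x := by
    rw [funext hf]; exact h2.comp x h1
  have h4 : HasGradientAt f (ContinuousLinearMap.adjoint A (gradient ψ (A x - b))) x := by
    rw [hasGradientAt_iff_hasFDerivAt]
    refine h3.congr_fderiv ?_
    refine ContinuousLinearMap.ext fun w => ?_
    rw [ContinuousLinearMap.comp_apply, InnerProductSpace.toDual_apply_apply,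
      ContinuousLinearMap.adjoint_inner_left]
    exact InnerProductSpace.toDual_symm_apply.symm
  exact h4.gradient

lemma gradpsi_contDiff (hψ : ContDiff ℝ 2 ψ) : ContDiff ℝ 1 (gradient ψ) := by
  have h1 : ContDiff ℝ 1 (fderiv ℝ ψ) := hψ.fderiv_right (by norm_num)
  exact ((InnerProductSpace.toDual ℝ (EuclideanSpace ℝ (Fin m))).symm.contDiff).comp h1

lemma hess_comp (hψ : ContDiff ℝ 2 ψ) (hf : ∀ y, f y = ψ (A y - b)) (x : EuclideanSpace ℝ (Fin n)) :
    HasFDerivAt (gradient f)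
      ((ContinuousLinearMap.adjoint A).comp
        ((fderiv ℝ (gradient ψ) (A x - b)).comp A)) x := by
  have hge : gradient f
      = fun y => ContinuousLinearMap.adjoint A (gradient ψ (A y - b)) :=
    funext (grad_comp hψ hf)
  rw [hge]
  have h1 : HasFDerivAt (fun y : EuclideanSpace ℝ (Fin n) => A y - b) A x :=
    A.hasFDerivAt.sub_const b
  have h2 : HasFDerivAt (gradient ψ) (fderiv ℝ (gradient ψ) (A x - b)) (A x - b) :=
    ((gradpsi_contDiff hψ).differentiable one_ne_zero).differentiableAt.hasFDerivAt
  exact (ContinuousLinearMap.adjoint A).hasFDerivAt.comp x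
    (HasFDerivAt.comp (g := gradient ψ) (f := fun y => A y - b) x h2 h1)

lemma fderiv_grad_symm (hψ : ContDiff ℝ 2 ψ) (u : EuclideanSpace ℝ (Fin m)) (w₁ w₂ : EuclideanSpace ℝ (Fin m)) :
    ⟪fderiv ℝ (gradient ψ) u w₁, w₂⟫ = ⟪w₁, fderiv ℝ (gradient ψ) u w₂⟫ := by
  have hde : gradient ψ
      = ⇑(InnerProductSpace.toDual ℝ (EuclideanSpace ℝ (Fin m))).symm ∘ fderiv ℝ ψ := rfl
  have hsym := (hψ.contDiffAt (x := u)).isSymmSndFDerivAt (by simp)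
  rw [hde, LinearIsometryEquiv.comp_fderiv]
  simp only [ContinuousLinearMap.coe_comp', Function.comp_apply,
    ContinuousLinearEquiv.coe_coe, LinearIsometryEquiv.coe_toContinuousLinearEquiv,
    LinearIsometryEquiv.coe_coe]
  rw [InnerProductSpace.toDual_symm_apply, real_inner_comm,
    InnerProductSpace.toDual_symm_apply]
  exact hsym w₁ w₂

lemma hess_eq (hψ : ContDiff ℝ 2 ψ) (hf : ∀ y, f y = ψ (A y - b))
    (x : EuclideanSpace ℝ (Fin n)) :
    fderiv ℝ (gradient f) x = (ContinuousLinearMap.adjoint A).comp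
        ((fderiv ℝ (gradient ψ) (A x - b)).comp A) :=
  (hess_comp hψ hf x).fderiv

lemma hess_diff_bound (hψ : ContDiff ℝ 2 ψ) (hf : ∀ y, f y = ψ (A y - b))
    (u v : EuclideanSpace ℝ (Fin n)) (C : ℝ)
    (hC : ‖fderiv ℝ (gradient ψ) (A u - b) - fderiv ℝ (gradient ψ) (A v - b)‖ ≤ C) :
    ‖fderiv ℝ (gradient f) u - fderiv ℝ (gradient f) v‖ ≤ ‖A‖ ^ 2 * C := by
  rw [hess_eq hψ hf u, hess_eq hψ hf v]
  set Bu := fderiv ℝ (gradient ψ) (A u - b)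
  set Bv := fderiv ℝ (gradient ψ) (A v - b)
  have he : (ContinuousLinearMap.adjoint A).comp (Bu.comp A)
      - (ContinuousLinearMap.adjoint A).comp (Bv.comp A)
      = (ContinuousLinearMap.adjoint A).comp ((Bu - Bv).comp A) := by
    rw [ContinuousLinearMap.sub_comp, ContinuousLinearMap.comp_sub]
  rw [he]
  have hadj : ‖ContinuousLinearMap.adjoint A‖ = ‖A‖ :=
    ContinuousLinearMap.adjoint.norm_map A
  have h1 := ContinuousLinearMap.opNorm_comp_le (ContinuousLinearMap.adjoint A)
    ((Bu - Bv).comp A)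
  have h2 := ContinuousLinearMap.opNorm_comp_le (Bu - Bv) A
  have hC0 : 0 ≤ C := le_trans (norm_nonneg _) hC
  have hBnn : (0:ℝ) ≤ ‖Bu - Bv‖ := norm_nonneg _
  have hAnn : (0:ℝ) ≤ ‖A‖ := norm_nonneg _
  calc ‖(ContinuousLinearMap.adjoint A).comp ((Bu - Bv).comp A)‖
      ≤ ‖ContinuousLinearMap.adjoint A‖ * ‖(Bu - Bv).comp A‖ := h1
    _ ≤ ‖A‖ * (‖Bu - Bv‖ * ‖A‖) := by
        rw [hadj]; exact mul_le_mul_of_nonneg_left h2 hAnn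
    _ ≤ ‖A‖ ^ 2 * C := by nlinarith [hC]

lemma grad_contDiff (hψ : ContDiff ℝ 2 ψ) (hf : ∀ y, f y = ψ (A y - b)) :
    ContDiff ℝ 1 (gradient f) := by
  have hge : gradient f
      = fun y => ContinuousLinearMap.adjoint A (gradient ψ (A y - b)) :=
    funext (grad_comp hψ hf)
  rw [hge]
  have haff : ContDiff ℝ 1 (fun y : EuclideanSpace ℝ (Fin n) => A y - b) :=
    (A.contDiff).sub contDiff_const
  exact (ContinuousLinearMap.adjoint A).contDiff.comp ((gradpsi_contDiff hψ).comp haff)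

lemma taylor_half (hψ : ContDiff ℝ 2 ψ) (hf : ∀ y, f y = ψ (A y - b))
    (x y : EuclideanSpace ℝ (Fin n)) (K : ℝ)
    (hK : ∀ t : ℝ, t ∈ Set.Icc (0:ℝ) 1 →
      ‖fderiv ℝ (gradient f) (x + t • (y - x)) - fderiv ℝ (gradient f) x‖ ≤ K * t) :
    ‖gradient f y - gradient f x - (fderiv ℝ (gradient f) x) (y - x)‖
      ≤ K / 2 * ‖y - x‖ := by
  set w : ℝ → EuclideanSpace ℝ (Fin n) := fun t =>
    (fderiv ℝ (gradient f) (x + t • (y - x))) (y - x)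
      - (fderiv ℝ (gradient f) x) (y - x) with hw
  set g : ℝ → EuclideanSpace ℝ (Fin n) := fun t =>
    gradient f (x + t • (y - x)) - t • ((fderiv ℝ (gradient f) x) (y - x)) with hg
  have hderiv : ∀ t : ℝ, HasDerivAt g (w t) t := by
    intro t
    have hline : HasDerivAt (fun t : ℝ => x + t • (y - x)) (y - x) t := by
      simpa using ((hasDerivAt_id t).smul_const (y - x)).const_add x
    have h1 : HasDerivAt (fun t : ℝ => gradient f (x + t • (y - x)))
        ((fderiv ℝ (gradient f) (x + t • (y - x))) (y - x)) t := by
      have h0 := (hess_comp hψ hf (x + t • (y - x))).comp_hasDerivAt t hline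
      rw [← hess_eq hψ hf (x + t • (y - x))] at h0
      exact h0
    have h2 : HasDerivAt (fun t : ℝ => t • ((fderiv ℝ (gradient f) x) (y - x)))
        ((fderiv ℝ (gradient f) x) (y - x)) t := by
      simpa using (hasDerivAt_id t).smul_const ((fderiv ℝ (gradient f) x) (y - x))
    exact h1.sub h2
  have hHcont : Continuous (fderiv ℝ (gradient f)) :=
    (grad_contDiff hψ hf).continuous_fderiv one_ne_zero
  have hwcont : Continuous w := by
    rw [hw]
    apply Continuous.sub _ continuous_const
    exact (ContinuousLinearMap.apply ℝ _ (y - x)).continuous.comp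
      (hHcont.comp ((continuous_const.add (continuous_id.smul continuous_const))))
  have hftc : ∫ t in (0:ℝ)..1, w t = g 1 - g 0 :=
    intervalIntegral.integral_eq_sub_of_hasDerivAt (fun t _ => hderiv t)
      (hwcont.intervalIntegrable 0 1)
  have hg1 : g 1 = gradient f y - (fderiv ℝ (gradient f) x) (y - x) := by
    rw [hg]
    simp only [one_smul]
    rw [show x + (y - x) = y by abel]
  have hg0 : g 0 = gradient f x := by
    rw [hg]
    simp
  have hbound : ‖∫ t in (0:ℝ)..1, w t‖ ≤ K / 2 * ‖y - x‖ := by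
    have hKnn : 0 ≤ K := by
      have := hK 1 ⟨zero_le_one, le_refl 1⟩
      have hnn := norm_nonneg ((fderiv ℝ (gradient f) (x + (1:ℝ) • (y - x))
        - fderiv ℝ (gradient f) x))
      nlinarith
    have hle : ∀ t ∈ Set.Icc (0:ℝ) 1, ‖w t‖ ≤ K * ‖y - x‖ * t := by
      intro t ht
      rw [hw]
      have h1 : ‖(fderiv ℝ (gradient f) (x + t • (y - x))) (y - x)
          - (fderiv ℝ (gradient f) x) (y - x)‖
          ≤ ‖fderiv ℝ (gradient f) (x + t • (y - x)) - fderiv ℝ (gradient f) x‖ * ‖y - x‖ := by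
        rw [← ContinuousLinearMap.sub_apply]
        exact ContinuousLinearMap.le_opNorm _ _
      have h2 := hK t ht
      calc ‖(fderiv ℝ (gradient f) (x + t • (y - x))) (y - x)
          - (fderiv ℝ (gradient f) x) (y - x)‖
          ≤ ‖fderiv ℝ (gradient f) (x + t • (y - x)) - fderiv ℝ (gradient f) x‖ * ‖y - x‖ := h1
        _ ≤ (K * t) * ‖y - x‖ := mul_le_mul_of_nonneg_right h2 (norm_nonneg _)
        _ = K * ‖y - x‖ * t := by ring
    have hint : ∫ t in (0:ℝ)..1, K * ‖y - x‖ * t = K / 2 * ‖y - x‖ := by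
      rw [intervalIntegral.integral_const_mul, integral_id]
      ring
    have haemeas : ∀ᵐ t ∂MeasureTheory.volume.restrict (Set.uIoc (0:ℝ) 1),
        ‖w t‖ ≤ K * ‖y - x‖ * t := by
      rw [Set.uIoc_of_le zero_le_one]
      filter_upwards [MeasureTheory.ae_restrict_mem measurableSet_Ioc] with t ht
      exact hle t ⟨ht.1.le, ht.2⟩
    have hintg : IntervalIntegrable (fun t => K * ‖y - x‖ * t) MeasureTheory.volume 0 1 :=
      (continuous_const.mul continuous_id).intervalIntegrable 0 1
    have h := intervalIntegral.norm_integral_le_of_norm_le zero_le_one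
      (Filter.Eventually.of_forall fun t ht => hle t ⟨ht.1.le, ht.2⟩) hintg
    rw [hint] at h
    calc ‖∫ t in (0:ℝ)..1, w t‖ ≤ |K / 2 * ‖y - x‖| := h.trans (le_abs_self _)
      _ = K / 2 * ‖y - x‖ := abs_of_nonneg
          (mul_nonneg (by linarith) (norm_nonneg _))
  rw [hftc, hg1, hg0] at hbound
  have : gradient f y - (fderiv ℝ (gradient f) x) (y - x) - gradient f x
      = gradient f y - gradient f x - (fderiv ℝ (gradient f) x) (y - x) := by abel
  rwa [this] at hbound

lemma hess_norm_le (hψ : ContDiff ℝ 2 ψ) (hf : ∀ y, f y = ψ (A y - b))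
    (x₀ : EuclideanSpace ℝ (Fin n)) (s : Set (EuclideanSpace ℝ (Fin n))) (hs : s ∈ nhds x₀)
    (Lg : ℝ) (hLg : 0 ≤ Lg)
    (hl : ∀ u ∈ s, ∀ v ∈ s, ‖gradient f u - gradient f v‖ ≤ Lg * ‖u - v‖) :
    ‖fderiv ℝ (gradient f) x₀‖ ≤ Lg := by
  rw [hess_eq hψ hf x₀]
  apply (hess_comp hψ hf x₀).le_of_lip' hLg
  filter_upwards [hs] with y hy
  exact hl y hy x₀ (mem_of_mem_nhds hs)

end Calc

section Lambda

variable {m : ℕ}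

lemma lambdaMin_bdd (T : EuclideanSpace ℝ (Fin m) →L[ℝ] EuclideanSpace ℝ (Fin m)) :
    BddBelow (Set.range fun u : {u : EuclideanSpace ℝ (Fin m) // ‖u‖ = 1} => ⟪T u.1, u.1⟫) := by
  refine ⟨-‖T‖, ?_⟩
  rintro _ ⟨u, rfl⟩
  have h1 := abs_real_inner_le_norm (T u.1) u.1
  have h2 := (T.le_opNorm u.1)
  have h3 : ‖u.1‖ = 1 := u.2
  rw [h3] at h1 h2
  have := neg_abs_le (⟪T u.1, u.1⟫)
  simp only [mul_one] at h1 h2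
  linarith

lemma lambdaMin_le_quad (T : EuclideanSpace ℝ (Fin m) →L[ℝ] EuclideanSpace ℝ (Fin m))
    (u : EuclideanSpace ℝ (Fin m)) : lambdaMin T * ‖u‖ ^ 2 ≤ ⟪T u, u⟫ := by
  by_cases hu : u = 0
  · simp [hu]
  · have hn : 0 < ‖u‖ := norm_pos_iff.mpr hu
    set v : EuclideanSpace ℝ (Fin m) := ‖u‖⁻¹ • u with hv
    have hv1 : ‖v‖ = 1 := by
      rw [hv, norm_smul, norm_inv, norm_norm, inv_mul_cancel₀ hn.ne']
    have hle : lambdaMin T ≤ ⟪T v, v⟫ := ciInf_le (lambdaMin_bdd T) ⟨v, hv1⟩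
    have hquad : ⟪T v, v⟫ = ‖u‖⁻¹ * ‖u‖⁻¹ * ⟪T u, u⟫ := by
      rw [hv, map_smul, real_inner_smul_left, real_inner_smul_right]
      ring
    rw [hquad] at hle
    have h2 : lambdaMin T * ‖u‖ ^ 2 ≤ (‖u‖⁻¹ * ‖u‖⁻¹ * ⟪T u, u⟫) * ‖u‖ ^ 2 :=
      mul_le_mul_of_nonneg_right hle (sq_nonneg _)
    have h4 : ‖u‖⁻¹ * ‖u‖ = 1 := inv_mul_cancel₀ hn.ne'
    have h3 : (‖u‖⁻¹ * ‖u‖⁻¹ * ⟪T u, u⟫) * ‖u‖ ^ 2 = ⟪T u, u⟫ := by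
      calc (‖u‖⁻¹ * ‖u‖⁻¹ * ⟪T u, u⟫) * ‖u‖ ^ 2
          = ((‖u‖⁻¹ * ‖u‖) * (‖u‖⁻¹ * ‖u‖)) * ⟪T u, u⟫ := by ring
        _ = ⟪T u, u⟫ := by rw [h4]; ring
    rw [h3] at h2
    exact h2

lemma le_lambdaMin (T : EuclideanSpace ℝ (Fin m) →L[ℝ] EuclideanSpace ℝ (Fin m))
    (c : ℝ) (hc : c ≤ 0) (h : ∀ u : EuclideanSpace ℝ (Fin m), ‖u‖ = 1 → c ≤ ⟪T u, u⟫) :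
    c ≤ lambdaMin T := by
  rcases isEmpty_or_nonempty {u : EuclideanSpace ℝ (Fin m) // ‖u‖ = 1} with he | hne
  · have : lambdaMin T = 0 := by
      rw [lambdaMin, iInf_of_isEmpty, Real.sInf_empty]
    rw [this]; exact hc
  · exact le_ciInf fun u => h u.1 u.2

end Lambda

end Stmt16Aux

set_option maxHeartbeats 2000000
set_option synthInstance.maxHeartbeats 400000
open Stmt16Aux

/-- Lemma 5.5: with `ε₁ = min{1/(2+L_g), ε₀/2}` and
`c = ν_min⁻¹θ(2+L_g)^{1+τ−δ}(1+L_g+aL+ν̄(2+L_g)^δ) + (L+2aL)/(2ν_min β) + 2`, for every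
`k ∈ K` with `xᵏ ∈ B_{ε₁}(x*)` one has `‖dᵏ‖ ≤ c·dist(xᵏ, X*)`. -/
theorem stmt_16 {n m : ℕ}
    -- problem data: f(x) = ψ(Ax − b), F = f + φ bounded below, φ convex, ψ C²
    (ψ : EuclideanSpace ℝ (Fin m) → ℝ)
    (A : EuclideanSpace ℝ (Fin n) →L[ℝ] EuclideanSpace ℝ (Fin m))
    (b : EuclideanSpace ℝ (Fin m))
    (φ : EuclideanSpace ℝ (Fin n) → ℝ)
    (hψ : ContDiff ℝ 2 ψ) (hφ : ConvexOn ℝ Set.univ φ)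
    (f F : EuclideanSpace ℝ (Fin n) → ℝ)
    (hf : ∀ y, f y = ψ (A y - b)) (hF : ∀ y, F y = f y + φ y)
    (hFbdd : BddBelow (Set.range F))
    -- algorithm parameters
    (c₁ c₂ σ₁ σ₂ η θ α a νmin ν₀ νbar δ τ pmin κ : ℝ)
    (hc₁ : 0 < c₁) (hc₁' : c₁ < 1) (hc₂ : c₁ < c₂) (hc₂' : c₂ < 1)
    (hσ₁ : 0 < σ₁) (hσ₁' : σ₁ < 1) (hσ₂ : 1 < σ₂)
    (hη : 0 < η) (hη' : η < 1) (hθ : 0 < θ) (hθ' : θ < 1)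
    (hα : 0 < α) (hα' : α < 1) (ha : 1 ≤ a)
    (hνmin : 0 < νmin) (hν₀a : νmin ≤ ν₀) (hν₀b : ν₀ ≤ νbar)
    (hδ0 : 0 < δ) (hδ1 : δ ≤ 1) (hτ : δ ≤ τ)
    (hpmin : 0 < pmin) (hpmin' : pmin < 1 / 2) (hκ : 1 + δ < κ)
    -- iterates and regularization sequences
    (x xhat : ℕ → EuclideanSpace ℝ (Fin n)) (ν rbar μ : ℕ → ℝ)
    (hν0 : ν 0 = ν₀) (hrbar0 : rbar 0 = ‖resid f φ (x 0)‖)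
    (hμ : ∀ k, μ k = ν k * rbar k ^ δ)
    -- Λ_k, H_k + μ_k I =: G_k, the models q_k, q̂_k, and the subproblem residual R_k
    (Λ : ℕ → ℝ)
    (hΛ : ∀ k, Λ k = a * max (-(lambdaMin (fderiv ℝ (gradient ψ) (A (x k) - b)))) 0)
    (G : ℕ → EuclideanSpace ℝ (Fin n) →L[ℝ] EuclideanSpace ℝ (Fin n))
    (hG : ∀ k, G k = fderiv ℝ (gradient f) (x k)
        + Λ k • ((ContinuousLinearMap.adjoint A).comp A)
        + μ k • ContinuousLinearMap.id ℝ (EuclideanSpace ℝ (Fin n)))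
    (q qhat : ℕ → EuclideanSpace ℝ (Fin n) → ℝ)
    (hq : ∀ k y, q k y = f (x k) + ⟪gradient f (x k), y - x k⟫
        + (1 / 2) * ⟪y - x k, (fderiv ℝ (gradient f) (x k)) (y - x k)⟫ + φ y)
    (hqhat : ∀ k y, qhat k y = f (x k) + ⟪gradient f (x k), y - x k⟫
        + (1 / 2) * ⟪y - x k, (G k) (y - x k)⟫ + φ y)
    (R : ℕ → EuclideanSpace ℝ (Fin n) → EuclideanSpace ℝ (Fin n))
    (hR : ∀ k y, R k y = y - proxPt φ (y - gradient f (x k) - (G k) (y - x k)))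
    -- the inexactness criteria satisfied by x̂ᵏ
    (hinex1 : ∀ k, ‖R k (xhat k)‖ ≤
        θ * min ‖resid f φ (x k)‖ (‖resid f φ (x k)‖ ^ (1 + τ)))
    (hinex2 : ∀ k, α * μ k / 2 * ‖xhat k - x k‖ ^ 2 ≤ F (x k) - qhat k (xhat k))
    -- dᵏ, pred_k, ared_k, ρ_k
    (d : ℕ → EuclideanSpace ℝ (Fin n)) (hd : ∀ k, d k = xhat k - x k)
    (pred ared ρ : ℕ → ℝ)
    (hpred : ∀ k, pred k = F (x k) - q k (xhat k))
    (hared : ∀ k, ared k = F (x k) - F (xhat k))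
    (hρ : ∀ k, ρ k = ared k / pred k)
    -- update rules (unsuccessful / successful / highly successful iterations)
    (unsucc : ℕ → Prop)
    (hunsucc : ∀ k, unsucc k ↔
        pred k ≤ pmin * (1 - θ) * ‖d k‖ *
          min ‖resid f φ (x k)‖ (‖resid f φ (x k)‖ ^ κ) ∨ ρ k ≤ c₁)
    (hupd : ∀ k,
        (unsucc k → x (k + 1) = x k ∧ ν (k + 1) = σ₂ * ν k) ∧
        (¬unsucc k → x (k + 1) = xhat k ∧
          (ρ k ≤ c₂ → ν (k + 1) = min (ν k) νbar) ∧
          (c₂ < ρ k → ν (k + 1) = min (max (σ₁ * ν k) νmin) νbar)))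
    (hrbarupd : ∀ k,
        (‖resid f φ (x (k + 1))‖ ≤ η * rbar k → rbar (k + 1) = ‖resid f φ (x (k + 1))‖) ∧
        (¬‖resid f φ (x (k + 1))‖ ≤ η * rbar k → rbar (k + 1) = rbar k))
    -- no iterate is stationary (otherwise the algorithm terminates)
    (hrne : ∀ k, resid f φ (x k) ≠ 0)
    -- the index set K
    (K : Set ℕ)
    (hK : K = {0} ∪ {k | 1 ≤ k ∧ ‖resid f φ (x k)‖ ≤ η * rbar (k - 1)})
    -- local assumptions: X* = set of strongly stationary points, x* an accumulation
    -- point of {xᵏ}_{k∈K} lying in X*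
    (Xstar : Set (EuclideanSpace ℝ (Fin n)))
    (hXstar : Xstar = {y | -gradient f y ∈ subdiff φ y ∧
        ∀ u, 0 ≤ ⟪(fderiv ℝ (gradient ψ) (A y - b)) u, u⟫})
    (hXne : Xstar.Nonempty)
    (xstar : EuclideanSpace ℝ (Fin n)) (hxstar : xstar ∈ Xstar)
    (hacc : MapClusterPt xstar (atTop ⊓ 𝓟 K) x)
    -- local Lipschitz continuity of ∇²ψ near x*
    (ε Lψ : ℝ) (hε : 0 < ε) (hLψ : 0 < Lψ)
    (hlipψ : ∀ u ∈ closedBall xstar ε, ∀ v ∈ closedBall xstar ε,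
      ‖fderiv ℝ (gradient ψ) (A u - b) - fderiv ℝ (gradient ψ) (A v - b)‖ ≤ Lψ * ‖A u - A v‖)
    -- Hölderian local error bound of order qq on X*
    (β qq : ℝ) (hβ : 0 < β) (hqq : max δ (1 - δ) < qq)
    (herrbd : ∀ y ∈ closedBall xstar ε, β * infDist y Xstar ≤ ‖resid f φ y‖ ^ qq)
    -- derived constants: ε₀, L = ‖A‖³Lψ, and a Lipschitz constant L_g of ∇f on B_{ε₀}(x*)
    (ε₀ L Lg : ℝ) (hε₀ : ε₀ = min ε (ε / ‖A‖)) (hL : L = ‖A‖ ^ 3 * Lψ) (hLg : 0 < Lg)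
    (hlipg : ∀ u ∈ closedBall xstar ε₀, ∀ v ∈ closedBall xstar ε₀,
      ‖gradient f u - gradient f v‖ ≤ Lg * ‖u - v‖)
    (ε₁ c : ℝ)
    (hε₁ : ε₁ = min (1 / (2 + Lg)) (ε₀ / 2))
    (hc : c = νmin⁻¹ * θ * (2 + Lg) ^ (1 + τ - δ) * (1 + Lg + a * L + νbar * (2 + Lg) ^ δ)
        + (L + 2 * a * L) / (2 * νmin * β) + 2) :
    ∀ k ∈ K, x k ∈ closedBall xstar ε₁ → ‖d k‖ ≤ c * infDist (x k) Xstar := by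
  intro k hkK hxball
  have hLg0 : (0:ℝ) < 2 + Lg := by linarith
  have hLnn : 0 ≤ L := by
    rw [hL]; exact mul_nonneg (pow_nonneg (norm_nonneg _) 3) hLψ.le
  have haL : 0 ≤ a * L := mul_nonneg (by linarith only [ha]) hLnn
  -- continuity facts
  have hφc : Continuous φ := convexOn_cont hφ
  have hgradc : Continuous (gradient f) := (grad_contDiff hψ hf).continuous
  have hBcont : Continuous (fun y : EuclideanSpace ℝ (Fin n) =>
      fderiv ℝ (gradient ψ) (A y - b)) :=
    ((gradpsi_contDiff hψ).continuous_fderiv one_ne_zero).comp (A.continuous.sub continuous_const)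
  -- X* is closed
  have hXcl : IsClosed Xstar := by
    rw [hXstar]
    have hset : {y | -gradient f y ∈ subdiff φ y ∧
        ∀ u, 0 ≤ ⟪(fderiv ℝ (gradient ψ) (A y - b)) u, u⟫}
        = (⋂ z, {y | φ y + ⟪-gradient f y, z - y⟫ ≤ φ z}) ∩
          (⋂ u, {y | 0 ≤ ⟪(fderiv ℝ (gradient ψ) (A y - b)) u, u⟫}) := by
      ext y
      simp only [subdiff, Set.mem_setOf_eq, Set.mem_inter_iff, Set.mem_iInter]
    rw [hset]
    apply IsClosed.inter
    · apply isClosed_iInter; intro z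
      exact isClosed_le
        (hφc.add ((hgradc.neg).inner (continuous_const.sub continuous_id))) continuous_const
    · apply isClosed_iInter; intro u
      exact isClosed_le continuous_const
        (((ContinuousLinearMap.apply ℝ (EuclideanSpace ℝ (Fin m)) u).continuous.comp
          hBcont).inner continuous_const)
  -- the projection point
  obtain ⟨xb, hxbX, hxbd⟩ := hXcl.exists_infDist_eq_dist hXne (x k)
  set dd : ℝ := infDist (x k) Xstar with hdd
  have hddnn : 0 ≤ dd := infDist_nonneg
  rw [hXstar] at hxbX
  have hxbsub : -gradient f xb ∈ subdiff φ xb := hxbX.1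
  have hxbpsd : ∀ u, 0 ≤ ⟪(fderiv ℝ (gradient ψ) (A xb - b)) u, u⟫ := hxbX.2
  have hrxb : resid f φ xb = 0 := by
    have hp := prox_of_subgrad hφ hxbsub
    have he : xb + -gradient f xb = xb - gradient f xb := by abel
    rw [he] at hp
    rw [resid, hp, sub_self]
  have hdd0 : 0 < dd := by
    rcases lt_or_eq_of_le hddnn with h | h
    · exact h
    · exfalso
      have hd0 : dist (x k) xb = 0 := by rw [← hxbd, ← h]
      have hxeq : x k = xb := by rwa [dist_eq_zero] at hd0
      exact hrne k (by rw [hxeq]; exact hrxb)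
  have hddε₁ : dd ≤ ε₁ := le_trans (infDist_le_dist_of_mem hxstar)
    (by rwa [mem_closedBall] at hxball)
  have hε₁a : ε₁ ≤ 1 / (2 + Lg) := by rw [hε₁]; exact min_le_left _ _
  have hε₁b : ε₁ ≤ ε₀ / 2 := by rw [hε₁]; exact min_le_right _ _
  have hdd3 : dd * (2 + Lg) ≤ 1 := by
    have h1 : dd ≤ 1 / (2 + Lg) := le_trans hddε₁ hε₁a
    exact (le_div_iff₀ hLg0).mp h1
  have hdd_le1 : dd ≤ 1 := by nlinarith only [hdd3, hddnn, hLg]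
  have hε₀pos : 0 < ε₀ := by
    have h0 := le_trans hddε₁ hε₁b
    linarith only [h0, hdd0]
  have hε₀ε : ε₀ ≤ ε := by rw [hε₀]; exact min_le_left _ _
  have hxkd : dist (x k) xstar ≤ ε₁ := by rwa [mem_closedBall] at hxball
  have hxkball₀ : x k ∈ closedBall xstar ε₀ := by
    rw [mem_closedBall]
    linarith only [hxkd, hε₁b, hε₀pos]
  have hxbball₀ : xb ∈ closedBall xstar ε₀ := by
    rw [mem_closedBall]
    have h1 : dist xb xstar ≤ dist xb (x k) + dist (x k) xstar := dist_triangle _ _ _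
    have h2 : dist xb (x k) = dd := by rw [dist_comm]; exact hxbd.symm
    have h3 : dd ≤ ε₀ / 2 := le_trans hddε₁ hε₁b
    linarith only [h1, h2, h3, hxkd, hε₁b]
  have hxkballε : x k ∈ closedBall xstar ε :=
    closedBall_subset_closedBall hε₀ε hxkball₀
  have hxbballε : xb ∈ closedBall xstar ε :=
    closedBall_subset_closedBall hε₀ε hxbball₀
  have hxbn : ‖x k - xb‖ = dd := by rw [← dist_eq_norm]; exact hxbd.symm
  have hxbn' : ‖xb - x k‖ = dd := by rw [norm_sub_rev]; exact hxbn
  -- residual norm bound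
  have hrpos : 0 < ‖resid f φ (x k)‖ := norm_pos_iff.mpr (hrne k)
  have hgraddiff : ‖gradient f (x k) - gradient f xb‖ ≤ Lg * dd := by
    have := hlipg (x k) hxkball₀ xb hxbball₀
    rwa [hxbn] at this
  have hpb : proxPt φ (xb - gradient f xb) = xb := by
    have hp := prox_of_subgrad hφ hxbsub
    have he : xb + -gradient f xb = xb - gradient f xb := by abel
    rwa [he] at hp
  have hrle : ‖resid f φ (x k)‖ ≤ (2 + Lg) * dd := by
    have hre : resid f φ (x k) = (x k - xb) + (proxPt φ (xb - gradient f xb)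
        - proxPt φ (x k - gradient f (x k))) := by
      rw [resid, hpb]; abel
    have hplip := prox_lip hφ (xb - gradient f xb) (x k - gradient f (x k))
    have hzz : (xb - gradient f xb) - (x k - gradient f (x k))
        = (xb - x k) - (gradient f xb - gradient f (x k)) := by abel
    have hzn : ‖(xb - gradient f xb) - (x k - gradient f (x k))‖ ≤ dd + Lg * dd := by
      rw [hzz]
      calc ‖(xb - x k) - (gradient f xb - gradient f (x k))‖
          ≤ ‖xb - x k‖ + ‖gradient f xb - gradient f (x k)‖ := norm_sub_le _ _
        _ ≤ dd + Lg * dd := by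
            rw [hxbn', norm_sub_rev]
            exact add_le_add_right hgraddiff _
    calc ‖resid f φ (x k)‖ = ‖(x k - xb) + (proxPt φ (xb - gradient f xb)
          - proxPt φ (x k - gradient f (x k)))‖ := by rw [← hre]
      _ ≤ ‖x k - xb‖ + ‖proxPt φ (xb - gradient f xb)
          - proxPt φ (x k - gradient f (x k))‖ := norm_add_le _ _
      _ ≤ dd + (dd + Lg * dd) := by
          rw [hxbn]
          exact add_le_add_right (le_trans hplip hzn) _
      _ = (2 + Lg) * dd := by ring
  have hr1 : ‖resid f φ (x k)‖ ≤ 1 := by linarith only [hrle, hdd3]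
  -- sequence facts
  have hνlow : ∀ j, νmin ≤ ν j := by
    intro j
    induction j with
    | zero => rw [hν0]; exact hν₀a
    | succ i ih =>
      by_cases hu : unsucc i
      · rw [((hupd i).1 hu).2]
        nlinarith only [ih, hσ₂, hνmin]
      · have h2 := (hupd i).2 hu
        rcases le_or_gt (ρ i) c₂ with hle | hgt
        · rw [h2.2.1 hle]
          exact le_min ih (le_trans hν₀a hν₀b)
        · rw [h2.2.2 hgt]
          exact le_min (le_max_right _ _) (le_trans hν₀a hν₀b)
  have hkey : rbar k = ‖resid f φ (x k)‖ ∧ ν k ≤ νbar := by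
    rw [hK] at hkK
    rcases hkK with h0 | ⟨hk1, hle⟩
    · have hk0 : k = 0 := h0
      subst hk0
      exact ⟨hrbar0, by rw [hν0]; exact hν₀b⟩
    · obtain ⟨j, rfl⟩ : ∃ j, k = j + 1 := ⟨k - 1, (Nat.succ_pred_eq_of_pos hk1).symm⟩
      have hlej : ‖resid f φ (x (j + 1))‖ ≤ η * rbar j := by simpa using hle
      have hns : ¬ unsucc j := by
        intro hu
        have hxeq : x (j + 1) = x j := ((hupd j).1 hu).1
        rw [hxeq] at hlej
        have hrjpos : 0 < ‖resid f φ (x j)‖ := norm_pos_iff.mpr (hrne j)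
        cases j with
        | zero =>
          rw [hrbar0] at hlej
          nlinarith only [hlej, hη', hrjpos]
        | succ i =>
          rcases le_or_gt ‖resid f φ (x (i + 1))‖ (η * rbar i) with hcase | hcase
          · rw [(hrbarupd i).1 hcase] at hlej
            nlinarith only [hlej, hη', hrjpos]
          · rw [(hrbarupd i).2 (not_le.mpr hcase)] at hlej
            linarith only [hlej, hcase]
      refine ⟨(hrbarupd j).1 hlej, ?_⟩
      have h2 := (hupd j).2 hns
      rcases le_or_gt (ρ j) c₂ with hle2 | hgt2
      · rw [h2.2.1 hle2]; exact min_le_right _ _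
      · rw [h2.2.2 hgt2]; exact min_le_right _ _
  have hμk : μ k = ν k * ‖resid f φ (x k)‖ ^ δ := by rw [hμ k, hkey.1]
  -- rpow facts
  have hrdnn : (0:ℝ) ≤ ‖resid f φ (x k)‖ ^ δ := Real.rpow_nonneg (norm_nonneg _) δ
  have herr : β * dd ≤ ‖resid f φ (x k)‖ ^ qq := herrbd (x k) hxkballε
  have hδqq : δ ≤ qq := le_of_lt (lt_of_le_of_lt (le_max_left δ (1 - δ)) hqq)
  have hqd : ‖resid f φ (x k)‖ ^ qq ≤ ‖resid f φ (x k)‖ ^ δ :=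
    Real.rpow_le_rpow_of_exponent_ge hrpos hr1 hδqq
  have hμlow : νmin * (β * dd) ≤ μ k := by
    rw [hμk]
    have h1 : νmin * (β * dd) ≤ νmin * ‖resid f φ (x k)‖ ^ δ := by
      apply mul_le_mul_of_nonneg_left (le_trans herr hqd) hνmin.le
    exact le_trans h1 (mul_le_mul_of_nonneg_right (hνlow k) hrdnn)
  have hμpos : 0 < μ k :=
    lt_of_lt_of_le (mul_pos hνmin (mul_pos hβ hdd0)) hμlow
  have hrpup : νmin * ‖resid f φ (x k)‖ ^ δ ≤ μ k := by
    rw [hμk]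
    exact mul_le_mul_of_nonneg_right (hνlow k) hrdnn
  -- ‖Rk‖ bounds
  have hRkr : ‖R k (xhat k)‖ ≤ θ * ‖resid f φ (x k)‖ ^ (1 + τ) :=
    le_trans (hinex1 k) (mul_le_mul_of_nonneg_left (min_le_right _ _) hθ.le)
  have hsplit : ‖resid f φ (x k)‖ ^ (1 + τ)
      = ‖resid f φ (x k)‖ ^ (1 + τ - δ) * ‖resid f φ (x k)‖ ^ δ := by
    rw [← Real.rpow_add hrpos]
    norm_num
  have hexpge : (1:ℝ) ≤ 1 + τ - δ := by linarith
  have hexpnn : (0:ℝ) ≤ 1 + τ - δ := by linarith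
  have hbase : ‖resid f φ (x k)‖ ^ (1 + τ - δ) ≤ (2 + Lg) ^ (1 + τ - δ) * dd := by
    have h1 : ‖resid f φ (x k)‖ ^ (1 + τ - δ) ≤ ((2 + Lg) * dd) ^ (1 + τ - δ) :=
      Real.rpow_le_rpow (norm_nonneg _) hrle hexpnn
    have h2 : ((2 + Lg) * dd) ^ (1 + τ - δ)
        = (2 + Lg) ^ (1 + τ - δ) * dd ^ (1 + τ - δ) :=
      Real.mul_rpow (by linarith) hddnn
    have h3 : dd ^ (1 + τ - δ) ≤ dd := by
      have := Real.rpow_le_rpow_of_exponent_ge hdd0 hdd_le1 hexpge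
      rwa [Real.rpow_one] at this
    have h4 : (0:ℝ) ≤ (2 + Lg) ^ (1 + τ - δ) :=
      Real.rpow_nonneg (by linarith only [hLg]) _
    nlinarith only [h1, h2, mul_le_mul_of_nonneg_left h3 h4]
  have hrd1 : ‖resid f φ (x k)‖ ^ δ ≤ 1 :=
    Real.rpow_le_one (norm_nonneg _) hr1 hδ0.le
  have hXqnn : (0:ℝ) ≤ (2 + Lg) ^ (1 + τ - δ) * dd :=
    mul_nonneg (Real.rpow_nonneg (by linarith only [hLg]) _) hddnn
  have hRkA : νmin * ‖R k (xhat k)‖ ≤ θ * ((2 + Lg) ^ (1 + τ - δ) * dd) * μ k := by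
    have h1 : νmin * ‖R k (xhat k)‖ ≤ νmin * (θ * (‖resid f φ (x k)‖ ^ (1 + τ - δ)
        * ‖resid f φ (x k)‖ ^ δ)) := by
      rw [← hsplit]
      exact mul_le_mul_of_nonneg_left hRkr hνmin.le
    have h2 : νmin * (θ * (‖resid f φ (x k)‖ ^ (1 + τ - δ) * ‖resid f φ (x k)‖ ^ δ))
        ≤ θ * ((2 + Lg) ^ (1 + τ - δ) * dd) * (νmin * ‖resid f φ (x k)‖ ^ δ) := by
      have hmul := mul_le_mul_of_nonneg_right hbase
        (mul_nonneg (mul_nonneg hνmin.le hθ.le) hrdnn)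
      linarith only [hmul]
    have h3 : θ * ((2 + Lg) ^ (1 + τ - δ) * dd) * (νmin * ‖resid f φ (x k)‖ ^ δ)
        ≤ θ * ((2 + Lg) ^ (1 + τ - δ) * dd) * μ k :=
      mul_le_mul_of_nonneg_left hrpup (mul_nonneg hθ.le hXqnn)
    linarith only [h1, h2, h3]
  have hRkB : ‖R k (xhat k)‖ ≤ θ * ((2 + Lg) ^ (1 + τ - δ) * dd) := by
    have h2 : θ * (‖resid f φ (x k)‖ ^ (1 + τ - δ) * ‖resid f φ (x k)‖ ^ δ)
        ≤ θ * ((2 + Lg) ^ (1 + τ - δ) * dd) := by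
      have hmul := mul_le_mul_of_nonneg_right hbase (mul_nonneg hθ.le hrdnn)
      have hmul2 := mul_le_mul_of_nonneg_left hrd1 (mul_nonneg hθ.le hXqnn)
      linarith only [hmul, hmul2]
    calc ‖R k (xhat k)‖ ≤ θ * ‖resid f φ (x k)‖ ^ (1 + τ) := hRkr
      _ = θ * (‖resid f φ (x k)‖ ^ (1 + τ - δ) * ‖resid f φ (x k)‖ ^ δ) := by rw [hsplit]
      _ ≤ θ * ((2 + Lg) ^ (1 + τ - δ) * dd) := h2
  -- Λ bounds
  have hΛnn : 0 ≤ Λ k := by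
    rw [hΛ k]
    exact mul_nonneg (by linarith only [ha]) (le_max_right _ _)
  have hABd : ‖A (x k) - A xb‖ ≤ ‖A‖ * dd := by
    rw [← map_sub]
    refine le_trans (A.le_opNorm _) ?_
    rw [hxbn]
  have hBkb : ‖fderiv ℝ (gradient ψ) (A (x k) - b) - fderiv ℝ (gradient ψ) (A xb - b)‖
      ≤ Lψ * (‖A‖ * dd) :=
    le_trans (hlipψ (x k) hxkballε xb hxbballε) (mul_le_mul_of_nonneg_left hABd hLψ.le)
  have hΛle : Λ k ≤ a * (Lψ * (‖A‖ * dd)) := by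
    rw [hΛ k]
    have ht0 : (0:ℝ) ≤ Lψ * (‖A‖ * dd) :=
      mul_nonneg hLψ.le (mul_nonneg (norm_nonneg _) hddnn)
    refine mul_le_mul_of_nonneg_left ?_ (by linarith only [ha] : (0:ℝ) ≤ a)
    refine max_le ?_ ht0
    have hll : -(Lψ * (‖A‖ * dd)) ≤ lambdaMin (fderiv ℝ (gradient ψ) (A (x k) - b)) := by
      refine le_lambdaMin _ _ (by linarith only [ht0]) ?_
      intro u hu
      have h2 := hxbpsd u
      have h4 := abs_real_inner_le_norm
        ((fderiv ℝ (gradient ψ) (A (x k) - b) - fderiv ℝ (gradient ψ) (A xb - b)) u) u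
      have h5 := (fderiv ℝ (gradient ψ) (A (x k) - b)
        - fderiv ℝ (gradient ψ) (A xb - b)).le_opNorm u
      rw [hu, mul_one] at h4 h5
      have h3 := le_trans h4 h5
      have h6 : ⟪(fderiv ℝ (gradient ψ) (A (x k) - b)) u, u⟫
          = ⟪(fderiv ℝ (gradient ψ) (A xb - b)) u, u⟫
            + ⟪((fderiv ℝ (gradient ψ) (A (x k) - b)
              - fderiv ℝ (gradient ψ) (A xb - b))) u, u⟫ := by
        rw [ContinuousLinearMap.sub_apply, inner_sub_left]
        ring
      have h7 := neg_abs_le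
        (⟪((fderiv ℝ (gradient ψ) (A (x k) - b) - fderiv ℝ (gradient ψ) (A xb - b))) u, u⟫)
      linarith only [h2, h3, h6.le, h6.ge, h7, hBkb]
    linarith only [hll]
  -- G facts
  have hGapp : ∀ h : EuclideanSpace ℝ (Fin n), (G k) h
      = (fderiv ℝ (gradient f) (x k)) h
        + Λ k • (ContinuousLinearMap.adjoint A (A h)) + μ k • h := by
    intro h
    rw [hG k]
    simp only [ContinuousLinearMap.add_apply, ContinuousLinearMap.coe_smul',
      Pi.smul_apply, ContinuousLinearMap.coe_comp', Function.comp_apply,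
      ContinuousLinearMap.coe_id', id_eq]
  have hHfquad : ∀ h : EuclideanSpace ℝ (Fin n),
      ⟪(fderiv ℝ (gradient f) (x k)) h, h⟫
        = ⟪(fderiv ℝ (gradient ψ) (A (x k) - b)) (A h), A h⟫ := by
    intro h
    rw [hess_eq hψ hf]
    rw [ContinuousLinearMap.comp_apply, ContinuousLinearMap.comp_apply,
      ContinuousLinearMap.adjoint_inner_left]
  have hmaxΛ : -(Λ k) ≤ lambdaMin (fderiv ℝ (gradient ψ) (A (x k) - b)) := by
    rw [hΛ k]
    have h2 := le_max_left (-(lambdaMin (fderiv ℝ (gradient ψ) (A (x k) - b)))) (0:ℝ)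
    have h3 := le_max_right (-(lambdaMin (fderiv ℝ (gradient ψ) (A (x k) - b)))) (0:ℝ)
    nlinarith only [h2, h3, ha]
  have hGquad : ∀ h : EuclideanSpace ℝ (Fin n), μ k * ‖h‖ ^ 2 ≤ ⟪(G k) h, h⟫ := by
    intro h
    rw [hGapp h, inner_add_left, inner_add_left, real_inner_smul_left, real_inner_smul_left]
    have h1 := lambdaMin_le_quad (fderiv ℝ (gradient ψ) (A (x k) - b)) (A h)
    have h2 : ⟪ContinuousLinearMap.adjoint A (A h), h⟫ = ‖A h‖ ^ 2 := by
      rw [ContinuousLinearMap.adjoint_inner_left, real_inner_self_eq_norm_sq]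
    have h3 : ⟪h, h⟫ = ‖h‖ ^ 2 := real_inner_self_eq_norm_sq h
    rw [hHfquad h, h2, h3]
    have h4 := mul_le_mul_of_nonneg_right hmaxΛ (sq_nonneg ‖A h‖)
    linarith only [h1, h4]
  have hHsym : ∀ u w : EuclideanSpace ℝ (Fin n),
      ⟪(fderiv ℝ (gradient f) (x k)) u, w⟫ = ⟪u, (fderiv ℝ (gradient f) (x k)) w⟫ := by
    intro u w
    rw [hess_eq hψ hf]
    rw [ContinuousLinearMap.comp_apply, ContinuousLinearMap.comp_apply,
      ContinuousLinearMap.adjoint_inner_left, ContinuousLinearMap.comp_apply,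
      ContinuousLinearMap.comp_apply, ContinuousLinearMap.adjoint_inner_right]
    exact fderiv_grad_symm hψ _ (A u) (A w)
  have hGsym : ∀ u w : EuclideanSpace ℝ (Fin n), ⟪(G k) u, w⟫ = ⟪u, (G k) w⟫ := by
    intro u w
    rw [hGapp u, hGapp w]
    rw [inner_add_left, inner_add_left, inner_add_right, inner_add_right,
      real_inner_smul_left, real_inner_smul_left, real_inner_smul_right,
      real_inner_smul_right]
    have h1 := hHsym u w
    have h2 : ⟪ContinuousLinearMap.adjoint A (A u), w⟫
        = ⟪u, ContinuousLinearMap.adjoint A (A w)⟫ := by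
      rw [ContinuousLinearMap.adjoint_inner_left, ContinuousLinearMap.adjoint_inner_right]
    rw [h1, h2]
  have hnhds : closedBall xstar ε₀ ∈ nhds (x k) :=
    closedBall_mem_nhds_of_mem (by
      rw [mem_closedBall] at hxball
      calc dist (x k) xstar ≤ ε₁ := hxball
        _ < ε₀ := by linarith only [hε₁b, hε₀pos])
  have hHfnorm : ‖fderiv ℝ (gradient f) (x k)‖ ≤ Lg :=
    hess_norm_le hψ hf (x k) _ hnhds Lg hLg.le hlipg
  have hadjn : ‖ContinuousLinearMap.adjoint A‖ = ‖A‖ :=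
    ContinuousLinearMap.adjoint.norm_map A
  have hΛA : ‖Λ k • ((ContinuousLinearMap.adjoint A).comp A)‖ ≤ a * L * dd := by
    refine le_trans (ContinuousLinearMap.opNorm_smul_le _ _) ?_
    rw [Real.norm_eq_abs, abs_of_nonneg hΛnn]
    have h1 : ‖(ContinuousLinearMap.adjoint A).comp A‖ ≤ ‖A‖ * ‖A‖ := by
      refine le_trans (ContinuousLinearMap.opNorm_comp_le _ _) ?_
      rw [hadjn]
    have h2 : Λ k * ‖(ContinuousLinearMap.adjoint A).comp A‖
        ≤ (a * (Lψ * (‖A‖ * dd))) * (‖A‖ * ‖A‖) :=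
      mul_le_mul hΛle h1 (norm_nonneg _)
        (mul_nonneg (by linarith only [ha])
          (mul_nonneg hLψ.le (mul_nonneg (norm_nonneg _) hddnn)))
    rw [hL]
    nlinarith only [h2]
  have hμid : ‖μ k • ContinuousLinearMap.id ℝ (EuclideanSpace ℝ (Fin n))‖ ≤ μ k := by
    refine le_trans (ContinuousLinearMap.opNorm_smul_le _ _) ?_
    rw [Real.norm_eq_abs, abs_of_nonneg hμpos.le]
    calc μ k * ‖ContinuousLinearMap.id ℝ (EuclideanSpace ℝ (Fin n))‖
        ≤ μ k * 1 := mul_le_mul_of_nonneg_left ContinuousLinearMap.norm_id_le hμpos.le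
      _ = μ k := mul_one _
  have hGnorm : ‖G k‖ ≤ Lg + a * L * dd + μ k := by
    rw [hG k]
    refine le_trans (norm_add_le _ _) ?_
    have h0 := norm_add_le (fderiv ℝ (gradient f) (x k))
      (Λ k • ((ContinuousLinearMap.adjoint A).comp A))
    linarith only [h0, hHfnorm, hΛA, hμid]
  -- Taylor estimate
  have hTay : ‖gradient f xb - gradient f (x k)
      - (fderiv ℝ (gradient f) (x k)) (xb - x k)‖ ≤ L * dd / 2 * dd := by
    have hKb : ∀ t : ℝ, t ∈ Set.Icc (0:ℝ) 1 →
        ‖fderiv ℝ (gradient f) (x k + t • (xb - x k))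
          - fderiv ℝ (gradient f) (x k)‖ ≤ L * dd * t := by
      intro t ht
      have hseg : x k + t • (xb - x k) ∈ closedBall xstar ε := by
        have hmem := (convex_closedBall xstar ε) hxkballε hxbballε
          (by linarith only [ht.2] : (0:ℝ) ≤ 1 - t) ht.1 (by ring)
        have he : (1 - t) • x k + t • xb = x k + t • (xb - x k) := by module
        rwa [he] at hmem
      have hC := hlipψ (x k + t • (xb - x k)) hseg (x k) hxkballε
      have hb := hess_diff_bound hψ hf (x k + t • (xb - x k)) (x k) _ hC
      refine le_trans hb ?_
      have hAe : ‖A (x k + t • (xb - x k)) - A (x k)‖ ≤ t * (‖A‖ * dd) := by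
        have he2 : A (x k + t • (xb - x k)) - A (x k) = t • A (xb - x k) := by
          rw [← map_sub, ← map_smul]
          congr 1
          module
        rw [he2, norm_smul, Real.norm_eq_abs, abs_of_nonneg ht.1]
        refine mul_le_mul_of_nonneg_left ?_ ht.1
        refine le_trans (A.le_opNorm _) ?_
        rw [hxbn']
      have h3 : ‖A‖ ^ 2 * (Lψ * ‖A (x k + t • (xb - x k)) - A (x k)‖)
          ≤ ‖A‖ ^ 2 * (Lψ * (t * (‖A‖ * dd))) :=
        mul_le_mul_of_nonneg_left (mul_le_mul_of_nonneg_left hAe hLψ.le) (sq_nonneg _)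
      refine le_trans h3 (le_of_eq ?_)
      rw [hL]; ring
    have h := taylor_half hψ hf (x k) xb (L * dd) hKb
    rwa [hxbn'] at h
  -- prox / subgradient elements
  have hz₀ : R k (xhat k) = xhat k
      - proxPt φ (xhat k - gradient f (x k) - (G k) (xhat k - x k)) := hR k (xhat k)
  set z₀ := xhat k - gradient f (x k) - (G k) (xhat k - x k) with hz₀def
  have hpe : proxPt φ z₀ = xhat k - R k (xhat k) := by rw [hz₀]; abel
  have hpsub := prox_subgrad hφ z₀
  obtain ⟨xs, hxs⟩ := exists_min_quad hφ (G k) (μ k) hμpos hGquad (gradient f (x k)) (x k)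
  have hwsub := min_subgrad hφ (G k) hGsym (gradient f (x k)) (x k) xs hxs
  have hmono1 := subdiff_mono hpsub hwsub
  have hv1 : (z₀ - proxPt φ z₀) - (-(gradient f (x k) + (G k) (xs - x k)))
      = R k (xhat k) - (G k) (xhat k - xs) := by
    rw [hpe, hz₀def]
    have hmap : (G k) (xhat k - x k) - (G k) (xs - x k) = (G k) (xhat k - xs) := by
      rw [← map_sub]
      congr 1
      abel
    rw [← hmap]
    abel
  have hv2 : proxPt φ z₀ - xs = (xhat k - xs) - R k (xhat k) := by rw [hpe]; abel
  rw [hv1, hv2] at hmono1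
  have hwkey : μ k * ‖xhat k - xs‖ ≤ (1 + ‖G k‖) * ‖R k (xhat k)‖ := by
    have hexp : ⟪R k (xhat k) - (G k) (xhat k - xs), (xhat k - xs) - R k (xhat k)⟫
        = ⟪R k (xhat k), xhat k - xs⟫ - ⟪R k (xhat k), R k (xhat k)⟫
          - ⟪(G k) (xhat k - xs), xhat k - xs⟫
          + ⟪(G k) (xhat k - xs), R k (xhat k)⟫ := by
      simp only [inner_sub_left, inner_sub_right]
      ring
    rw [hexp] at hmono1
    have hb1 := real_inner_le_norm (R k (xhat k)) (xhat k - xs)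
    have hb2 := real_inner_self_nonneg (x := R k (xhat k))
    have hb3 : ⟪(G k) (xhat k - xs), R k (xhat k)⟫
        ≤ ‖G k‖ * ‖xhat k - xs‖ * ‖R k (xhat k)‖ :=
      le_trans (real_inner_le_norm _ _)
        (mul_le_mul_of_nonneg_right ((G k).le_opNorm _) (norm_nonneg _))
    have hGq := hGquad (xhat k - xs)
    by_cases hw0 : ‖xhat k - xs‖ = 0
    · rw [hw0, mul_zero]
      exact mul_nonneg (by linarith only [norm_nonneg (G k)]) (norm_nonneg _)
    · have hwpos : 0 < ‖xhat k - xs‖ := lt_of_le_of_ne (norm_nonneg _) (Ne.symm hw0)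
      have hkey2 : (μ k * ‖xhat k - xs‖) * ‖xhat k - xs‖
          ≤ ((1 + ‖G k‖) * ‖R k (xhat k)‖) * ‖xhat k - xs‖ := by
        nlinarith only [hmono1, hb1, hb2, hb3, hGq]
      exact le_of_mul_le_mul_right hkey2 hwpos
  have hmono2 := subdiff_mono hwsub hxbsub
  have hv3 : (-(gradient f (x k) + (G k) (xs - x k))) - (-gradient f xb)
      = -(gradient f (x k) - gradient f xb + (G k) (xb - x k)) - (G k) (xs - xb) := by
    have hmap2 : (G k) (xs - x k) = (G k) (xs - xb) + (G k) (xb - x k) := by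
      rw [← map_add]
      congr 1
      abel
    rw [hmap2]
    abel
  rw [hv3] at hmono2
  have hskey : μ k * ‖xs - xb‖
      ≤ ‖gradient f (x k) - gradient f xb + (G k) (xb - x k)‖ := by
    have hexp2 : ⟪-(gradient f (x k) - gradient f xb + (G k) (xb - x k))
          - (G k) (xs - xb), xs - xb⟫
        = -⟪gradient f (x k) - gradient f xb + (G k) (xb - x k), xs - xb⟫
          - ⟪(G k) (xs - xb), xs - xb⟫ := by
      rw [inner_sub_left, inner_neg_left]
    rw [hexp2] at hmono2
    have hb4 : -⟪gradient f (x k) - gradient f xb + (G k) (xb - x k), xs - xb⟫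
        ≤ ‖gradient f (x k) - gradient f xb + (G k) (xb - x k)‖ * ‖xs - xb‖ := by
      have h8 := abs_real_inner_le_norm
        (gradient f (x k) - gradient f xb + (G k) (xb - x k)) (xs - xb)
      have h7 := neg_abs_le
        (⟪gradient f (x k) - gradient f xb + (G k) (xb - x k), xs - xb⟫)
      linarith only [h8, h7]
    have hGq2 := hGquad (xs - xb)
    by_cases hs0 : ‖xs - xb‖ = 0
    · rw [hs0, mul_zero]
      exact norm_nonneg _
    · have hspos : 0 < ‖xs - xb‖ := lt_of_le_of_ne (norm_nonneg _) (Ne.symm hs0)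
      have hkey3 : (μ k * ‖xs - xb‖) * ‖xs - xb‖
          ≤ ‖gradient f (x k) - gradient f xb + (G k) (xb - x k)‖ * ‖xs - xb‖ := by
        nlinarith only [hmono2, hb4, hGq2]
      exact le_of_mul_le_mul_right hkey3 hspos
  -- bound on the model-gradient error
  have hQe : gradient f (x k) - gradient f xb + (G k) (xb - x k)
      = -(gradient f xb - gradient f (x k)
          - (fderiv ℝ (gradient f) (x k)) (xb - x k))
        + Λ k • (ContinuousLinearMap.adjoint A (A (xb - x k))) + μ k • (xb - x k) := by
    rw [hGapp (xb - x k)]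
    abel
  have hQ1 : ‖Λ k • (ContinuousLinearMap.adjoint A (A (xb - x k)))‖
      ≤ a * L * dd * dd := by
    rw [norm_smul, Real.norm_eq_abs, abs_of_nonneg hΛnn]
    have h1 : ‖ContinuousLinearMap.adjoint A (A (xb - x k))‖ ≤ ‖A‖ * (‖A‖ * dd) := by
      refine le_trans ((ContinuousLinearMap.adjoint A).le_opNorm _) ?_
      rw [hadjn]
      refine mul_le_mul_of_nonneg_left ?_ (norm_nonneg _)
      refine le_trans (A.le_opNorm _) ?_
      rw [hxbn']
    have h2 := mul_le_mul hΛle h1 (norm_nonneg _)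
      (mul_nonneg (by linarith only [ha])
        (mul_nonneg hLψ.le (mul_nonneg (norm_nonneg _) hddnn)))
    rw [hL]
    nlinarith only [h2]
  have hQ2 : ‖μ k • (xb - x k)‖ = μ k * dd := by
    rw [norm_smul, Real.norm_eq_abs, abs_of_nonneg hμpos.le, hxbn']
  have hQb : ‖gradient f (x k) - gradient f xb + (G k) (xb - x k)‖
      ≤ L * dd / 2 * dd + a * L * dd * dd + μ k * dd := by
    rw [hQe]
    refine le_trans (norm_add_le _ _) ?_
    have h5 := norm_add_le (-(gradient f xb - gradient f (x k)
        - (fderiv ℝ (gradient f) (x k)) (xb - x k)))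
      (Λ k • (ContinuousLinearMap.adjoint A (A (xb - x k))))
    rw [norm_neg] at h5
    linarith only [h5, hTay, hQ1, hQ2.le, hQ2.ge]
  have hdsum : ‖d k‖ ≤ ‖xhat k - xs‖ + ‖xs - xb‖ + dd := by
    have hde : d k = (xhat k - xs) + ((xs - xb) + (xb - x k)) := by
      rw [hd k]
      abel
    rw [hde]
    refine le_trans (norm_add_le _ _) ?_
    have h6 := norm_add_le (xs - xb) (xb - x k)
    rw [hxbn'] at h6
    linarith only [h6]
  -- numeric finale
  have hRnnn : (0:ℝ) ≤ ‖R k (xhat k)‖ := norm_nonneg _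
  have h2d : (1:ℝ) ≤ (2 + Lg) ^ δ := by
    have h := Real.rpow_le_rpow_of_exponent_le
      (by linarith only [hLg] : (1:ℝ) ≤ 2 + Lg) hδ0.le
    rwa [Real.rpow_zero] at h
  have hνbarnn : (0:ℝ) ≤ νbar := by linarith only [hνmin, hν₀a, hν₀b]
  have hone : νmin ≤ νbar * (2 + Lg) ^ δ := by
    have h := mul_le_mul_of_nonneg_left h2d hνbarnn
    rw [mul_one] at h
    linarith only [h, hν₀a, hν₀b]
  have hGn2 : ‖G k‖ ≤ Lg + a * L + μ k := by
    have h8 := mul_le_mul_of_nonneg_left hdd_le1 haL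
    rw [mul_one] at h8
    linarith only [hGnorm, h8]
  have e1 : μ k * ‖xhat k - xs‖
      ≤ (1 + Lg + a * L) * ‖R k (xhat k)‖ + μ k * ‖R k (xhat k)‖ := by
    have h9 := mul_le_mul_of_nonneg_right hGn2 hRnnn
    nlinarith only [hwkey, h9]
  have e2 : μ k * ‖xs - xb‖ ≤ (L / 2 + a * L) * (dd * dd) + μ k * dd := by
    nlinarith only [hskey, hQb]
  have e3 : (1 + Lg + a * L) * ‖R k (xhat k)‖
      ≤ ((1 + Lg + a * L) * (θ * ((2 + Lg) ^ (1 + τ - δ) * dd)) / νmin) * μ k := by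
    rw [div_mul_eq_mul_div, le_div_iff₀ hνmin]
    have coefnn : (0:ℝ) ≤ 1 + Lg + a * L := by linarith only [hLg, haL]
    have h10 := mul_le_mul_of_nonneg_left hRkA coefnn
    nlinarith only [h10]
  have e4 : μ k * ‖R k (xhat k)‖
      ≤ (θ * ((2 + Lg) ^ (1 + τ - δ) * dd) * (νbar * (2 + Lg) ^ δ) / νmin) * μ k := by
    rw [div_mul_eq_mul_div, le_div_iff₀ hνmin]
    have h10 := mul_le_mul_of_nonneg_left hRkB hμpos.le
    have h10' := mul_le_mul_of_nonneg_right h10 hνmin.le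
    have h11 := mul_le_mul_of_nonneg_left hone
      (mul_nonneg hμpos.le (mul_nonneg hθ.le hXqnn))
    nlinarith only [h10', h11]
  have e5 : (L / 2 + a * L) * (dd * dd)
      ≤ ((L + 2 * a * L) / (2 * νmin * β) * dd) * μ k := by
    have hds : dd * (νmin * β) ≤ μ k := by nlinarith only [hμlow]
    rw [div_mul_eq_mul_div, div_mul_eq_mul_div, le_div_iff₀
      (by nlinarith only [hνmin, hβ] : (0:ℝ) < 2 * νmin * β)]
    have hcc : (0:ℝ) ≤ (L + 2 * a * L) * dd :=
      mul_nonneg (by linarith only [hLnn, haL]) hddnn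
    have h12 := mul_le_mul_of_nonneg_left hds hcc
    nlinarith only [h12]
  have hsum : μ k * (‖xhat k - xs‖ + ‖xs - xb‖)
      ≤ μ k * ((((1 + Lg + a * L) * (θ * ((2 + Lg) ^ (1 + τ - δ) * dd)) / νmin)
        + (θ * ((2 + Lg) ^ (1 + τ - δ) * dd) * (νbar * (2 + Lg) ^ δ) / νmin)
        + ((L + 2 * a * L) / (2 * νmin * β) * dd) + dd)) := by
    nlinarith only [e1, e2, e3, e4, e5]
  have hWS : ‖xhat k - xs‖ + ‖xs - xb‖
      ≤ (((1 + Lg + a * L) * (θ * ((2 + Lg) ^ (1 + τ - δ) * dd)) / νmin)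
        + (θ * ((2 + Lg) ^ (1 + τ - δ) * dd) * (νbar * (2 + Lg) ^ δ) / νmin)
        + ((L + 2 * a * L) / (2 * νmin * β) * dd) + dd) :=
    le_of_mul_le_mul_left hsum hμpos
  rw [hc]
  have hfin : (((1 + Lg + a * L) * (θ * ((2 + Lg) ^ (1 + τ - δ) * dd)) / νmin)
        + (θ * ((2 + Lg) ^ (1 + τ - δ) * dd) * (νbar * (2 + Lg) ^ δ) / νmin)
        + ((L + 2 * a * L) / (2 * νmin * β) * dd) + dd) + dd
      = (νmin⁻¹ * θ * (2 + Lg) ^ (1 + τ - δ) * (1 + Lg + a * L + νbar * (2 + Lg) ^ δ)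
        + (L + 2 * a * L) / (2 * νmin * β) + 2) * dd := by
    field_simp
    ring
  calc ‖d k‖ ≤ ‖xhat k - xs‖ + ‖xs - xb‖ + dd := hdsum
    _ ≤ (((1 + Lg + a * L) * (θ * ((2 + Lg) ^ (1 + τ - δ) * dd)) / νmin)
        + (θ * ((2 + Lg) ^ (1 + τ - δ) * dd) * (νbar * (2 + Lg) ^ δ) / νmin)
        + ((L + 2 * a * L) / (2 * νmin * β) * dd) + dd) + dd := by
        linarith only [hWS]
    _ = _ := hfin
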